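/- Let p be an odd prime, n a positive integer, q = pⁿ, and K a finite field with q² = p^{2n} elements with F its subfield of order q. Let f(x) = x², or f(x) = x^{p^k+1} where 1 ≤ k ≤ n and 2n/gcd(2n,k) is odd. Let θ ∈ K \ {0} with θ^{q+1} a nonsquare in F. Then the unital U_θ in Π(f) contains an O'Nan configuration: there exist four distinct blocks of U_θ, any two of which intersect, whose six pairwise intersection points are pairwise distinct (no three of the four blocks pass through a common point). -/

import Mathlib

/-- The set `θF = {tθ : t ∈ F}`, where `F = {t : t^q = t}` is the subfield of order `q`. -/
def scalarSet (K : Type) [Field K] (q : ℕ) (θ : K) : Set K :=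
  {c | ∃ t : K, t ^ q = t ∧ c = t * θ}

/-- The point set of the unital `U_θ` viewed as a design:
`{(x, tθ) : x ∈ K, t ∈ F} ∪ {(∞)}`, with `(∞)` encoded as `Sum.inr ()`. -/
def unitalPts (K : Type) [Field K] (q : ℕ) (θ : K) : Set ((K × K) ⊕ Unit) :=
  {P | (∃ x t : K, t ^ q = t ∧ P = Sum.inl (x, t * θ)) ∨ P = Sum.inr ()}

/-- The block `B_u = {(u, tθ) : t ∈ F} ∪ {(∞)}` of the unital `U_θ`. -/
def blockInf (K : Type) [Field K] (q : ℕ) (θ : K) (u : K) : Set ((K × K) ⊕ Unit) :=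
  {P | (∃ t : K, t ^ q = t ∧ P = Sum.inl (u, t * θ)) ∨ P = Sum.inr ()}

/-- The block `B_{a,b} = {(x, tθ) : x ∈ K, t ∈ F, f(x+a) − b = tθ}` of `U_θ`. -/
def blockAff (K : Type) [Field K] (q : ℕ) (θ : K) (f : K → K) (a b : K) :
    Set ((K × K) ⊕ Unit) :=
  {P | ∃ x t : K, t ^ q = t ∧ f (x + a) - b = t * θ ∧ P = Sum.inl (x, t * θ)}

/-- The set of all blocks of the unital `U_θ`: the blocks `B_u` through `(∞)` and
the blocks `B_{a,b}` with `b ∉ θF`. -/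
def allBlocks (K : Type) [Field K] (q : ℕ) (θ : K) (f : K → K) :
    Set (Set ((K × K) ⊕ Unit)) :=
  {B | (∃ u : K, B = blockInf K q θ u) ∨
       (∃ a b : K, b ∉ scalarSet K q θ ∧ B = blockAff K q θ f a b)}

private lemma onan_planar {K : Type} [Field K] {Q m : ℕ} (hQodd : Odd Q) (hm : Odd m)
    (hid : ∀ x : K, x ^ Q ^ m = x) (h2 : (2 : K) ≠ 0) :
    ∀ x D : K, D ≠ 0 → x * D ^ Q + x ^ Q * D = 0 → x = 0 := by
  intro x D hD heq
  by_contra hx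
  have hDQ : D ^ Q ≠ 0 := pow_ne_zero _ hD
  have hbase : (x / D) ^ Q = -(x / D) := by
    rw [div_pow, ← neg_div, div_eq_div_iff hDQ hD]
    linear_combination heq
  have hiter : ∀ i : ℕ, (x / D) ^ Q ^ i = (-1 : K) ^ i * (x / D) := by
    intro i
    induction i with
    | zero => simp
    | succ i ih =>
      have h1 : (x / D) ^ Q ^ (i + 1) = ((x / D) ^ Q ^ i) ^ Q := by
        rw [← pow_mul, pow_succ]
      rw [h1, ih, mul_pow, hbase, ← pow_mul, mul_comm i Q, pow_mul, hQodd.neg_one_pow,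
        pow_succ]
      ring
  have hfin := hiter m
  rw [hid, hm.neg_one_pow, neg_one_mul] at hfin
  have hxD : x / D ≠ 0 := div_ne_zero hx hD
  have : (2 : K) * (x / D) = 0 := by linear_combination hfin
  rcases mul_eq_zero.mp this with h | h
  · exact h2 h
  · exact hxD h

private lemma onan_tele {K : Type} [Field K] (σ : K →+* K) {Q m : ℕ} (hQodd : Odd Q)
    (hσ : ∀ x : K, σ x = x ^ Q) (hm : Odd m) (hid : ∀ x : K, x ^ Q ^ m = x) (y : K) :
    (∑ i ∈ Finset.range m, (-1 : K) ^ i * y ^ Q ^ i) +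
      σ (∑ i ∈ Finset.range m, (-1 : K) ^ i * y ^ Q ^ i) = 2 * y := by
  have hterm : ∀ i : ℕ, σ ((-1 : K) ^ i * y ^ Q ^ i) = -((-1 : K) ^ (i + 1) * y ^ Q ^ (i + 1)) := by
    intro i
    rw [hσ, mul_pow, ← pow_mul, ← pow_mul, mul_comm i Q, pow_mul, hQodd.neg_one_pow,
      ← pow_succ, pow_succ (-1 : K) i]
    ring
  rw [map_sum, Finset.sum_congr rfl (fun i _ => hterm i), Finset.sum_neg_distrib]
  have hs1 := Finset.sum_range_succ' (fun i => (-1 : K) ^ i * y ^ Q ^ i) m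
  have hs2 := Finset.sum_range_succ (fun i => (-1 : K) ^ i * y ^ Q ^ i) m
  have hQm : y ^ Q ^ m = y := hid y
  have hm1 : ((-1 : K) ^ m) = -1 := hm.neg_one_pow
  rw [hs2] at hs1
  -- hs1 : (∑ i in range m, a i) + a m = (∑ i in range m, a (i+1)) + a 0
  have : (∑ i ∈ Finset.range m, (-1 : K) ^ (i + 1) * y ^ Q ^ (i + 1))
      = (∑ i ∈ Finset.range m, (-1 : K) ^ i * y ^ Q ^ i) + (-1 : K) ^ m * y ^ Q ^ m
        - (-1 : K) ^ 0 * y ^ Q ^ 0 := by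
      rw [eq_sub_iff_add_eq]
      linear_combination hs1.symm
  rw [this, hQm, hm1]
  simp
  ring

private lemma onan_j {K : Type} [Field K] [Fintype K] {p n q kk m : ℕ}
    (hp : p.Prime) (hn : 0 < n) (hq : q = p ^ n)
    (hcard : Fintype.card K = q ^ 2)
    (hm : Odd m) (hg0m : Nat.gcd kk (2 * n) * m = 2 * n) :
    ∃ j : K, j ≠ 0 ∧ j ^ p ^ kk = j ∧ j ^ q = -j := by
  classical
  set g0 := Nat.gcd kk (2 * n) with hg0
  have hp2 : 2 ≤ p := hp.two_le
  haveI : Fact p.Prime := ⟨hp⟩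
  haveI hKp : CharP K p := by
    haveI : CharP K (ringChar K) := ringChar.charP K
    have hrprime : (ringChar K).Prime := CharP.char_is_prime K (ringChar K)
    obtain ⟨d, _, hcd⟩ := FiniteField.card K (ringChar K)
    have h1 : ringChar K ∣ Fintype.card K := by
      rw [hcd]; exact dvd_pow_self _ (by positivity)
    rw [hcard, hq, ← pow_mul] at h1
    have hrp : ringChar K = p :=
      (Nat.prime_dvd_prime_iff_eq hrprime hp).mp (hrprime.dvd_of_dvd_pow h1)
    exact hrp ▸ ringChar.charP K
  have hn2 : 0 < 2 * n := by omega
  have hg0pos : 0 < g0 := by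
    rcases Nat.eq_zero_or_pos g0 with h | h
    · rw [h, zero_mul] at hg0m; omega
    · exact h
  have hg0even : 2 ∣ g0 := by
    rcases Nat.even_or_odd g0 with h | h
    · exact h.two_dvd
    · exfalso
      have : Odd (g0 * m) := h.mul hm
      rw [hg0m] at this
      exact (Nat.not_odd_iff_even.mpr (even_two_mul n)) this
  obtain ⟨g1, hg1⟩ := hg0even
  have hg1pos : 0 < g1 := by omega
  have hg1lt : g1 < g0 := by omega
  have hng1m : n = g1 * m := by
    have h2 : 2 * (g1 * m) = 2 * n := by rw [← hg0m, hg1]; ring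
    omega
  obtain ⟨r, hr⟩ := hm
  have hnsub : n - g1 = g0 * r := by
    have : n = g1 * 2 * r + g1 := by rw [hng1m, hr]; ring
    rw [this, hg1]; ring_nf; omega
  -- generator of Kˣ
  obtain ⟨ζ, hζ⟩ := IsCyclic.exists_generator (α := Kˣ)
  have hcardu : Fintype.card Kˣ = q ^ 2 - 1 := by
    rw [Fintype.card_units, hcard]
  have hord : orderOf ζ = q ^ 2 - 1 := by
    rw [orderOf_eq_card_of_forall_mem_zpowers hζ, Nat.card_eq_fintype_card, hcardu]
  have hq2 : q ^ 2 = (p ^ g0) ^ m := by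
    rw [hq, ← pow_mul, ← pow_mul]
    congr 1
    omega
  have hdvd1 : p ^ g0 - 1 ∣ q ^ 2 - 1 := by
    rw [hq2]
    simpa using Nat.sub_dvd_pow_sub_pow (p ^ g0) 1 m
  have hpg0_1 : 1 < p ^ g0 := Nat.one_lt_pow (by omega) (by omega)
  have hq2pos : 0 < q ^ 2 - 1 := by
    have : 1 < q := by rw [hq]; exact Nat.one_lt_pow (by omega) (by omega)
    have : 1 < q ^ 2 := by nlinarith
    omega
  set N := (q ^ 2 - 1) / (p ^ g0 - 1) with hN
  have hNmul : N * (p ^ g0 - 1) = q ^ 2 - 1 := Nat.div_mul_cancel hdvd1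
  set z := ζ ^ N with hz
  have hzord : orderOf z = p ^ g0 - 1 := by
    rw [hz, orderOf_pow, hord]
    have hgcd : Nat.gcd (q ^ 2 - 1) N = N := Nat.gcd_eq_right ⟨p ^ g0 - 1, hNmul.symm⟩
    rw [hgcd]
    rw [hN]
    exact Nat.div_div_self hdvd1 (by omega)
  -- z ^ (p ^ kk) = z
  have hkkdvd : g0 ∣ kk := Nat.gcd_dvd_left _ _
  have hdvd2 : p ^ g0 - 1 ∣ p ^ kk - 1 := by
    obtain ⟨u, hu⟩ := hkkdvd
    rw [hu, pow_mul]
    simpa using Nat.sub_dvd_pow_sub_pow (p ^ g0) 1 u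
  have hzkk : z ^ p ^ kk = z := by
    have h1 : z ^ (p ^ kk - 1) = 1 := by
      apply orderOf_dvd_iff_pow_eq_one.mp
      rw [hzord]; exact hdvd2
    have hkk1 : 1 ≤ p ^ kk := Nat.one_le_pow _ _ (by omega)
    calc z ^ p ^ kk = z ^ (p ^ kk - 1) * z := by
          rw [← pow_succ]; congr 1; omega
      _ = z := by rw [h1, one_mul]
  -- z ^ q ≠ z
  have hzq : z ^ q ≠ z := by
    intro heq
    have h1 : z ^ (q - 1) = 1 := by
      have hq1 : 1 ≤ q := by rw [hq]; exact Nat.one_le_pow _ _ (by omega)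
      have h2 : z ^ (q - 1) * z = 1 * z := by
        rw [← pow_succ, one_mul]
        have h3 : q - 1 + 1 = q := by omega
        rw [h3, heq]
      exact mul_right_cancel h2
    have hdvdq : p ^ g0 - 1 ∣ q - 1 := by
      rw [← hzord]; exact orderOf_dvd_iff_pow_eq_one.mpr h1
    -- p^g0 - 1 ∣ p^n - p^g1 = p^g1 * (p^(n-g1) - 1)
    have hdvd3 : p ^ g0 - 1 ∣ p ^ n - p ^ g1 := by
      have hsplit : p ^ n - p ^ g1 = p ^ g1 * (p ^ (n - g1) - 1) := by
        have hgn : g1 + (n - g1) = n := by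
          have : g1 ≤ n := by rw [hng1m]; exact Nat.le_mul_of_pos_right _ (by omega)
          omega
        rw [Nat.mul_sub, mul_one, ← pow_add, hgn]
      rw [hsplit, hnsub]
      apply Dvd.dvd.mul_left
      rw [pow_mul]
      simpa using Nat.sub_dvd_pow_sub_pow (p ^ g0) 1 r
    have hg1len : g1 ≤ n := by
      rw [hng1m]; exact Nat.le_mul_of_pos_right _ (by omega)
    have hple : p ^ g1 ≤ p ^ n := Nat.pow_le_pow_right (by omega) hg1len
    have hpg1pos : 1 ≤ p ^ g1 := Nat.one_le_pow _ _ (by omega)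
    have hdvd4 : p ^ g0 - 1 ∣ p ^ g1 - 1 := by
      have heq2 : p ^ g1 - 1 = (q - 1) - (p ^ n - p ^ g1) := by
        rw [hq]; omega
      rw [heq2]
      exact Nat.dvd_sub hdvdq hdvd3
    have hlt : p ^ g1 - 1 < p ^ g0 - 1 := by
      have : p ^ g1 < p ^ g0 := Nat.pow_lt_pow_right (by omega) hg1lt
      omega
    have hpos : 0 < p ^ g1 - 1 := by
      have : 1 < p ^ g1 := Nat.one_lt_pow (by omega) (by omega)
      omega
    have := Nat.le_of_dvd hpos hdvd4
    omega
  -- construct j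
  refine ⟨(z : K) - (z : K) ^ q, ?_, ?_, ?_⟩
  · intro h
    apply hzq
    have : (z : K) ^ q = (z : K) := by linear_combination -h
    exact Units.ext (by push_cast; exact this)
  · have hzc : (z : K) ^ p ^ kk = z := by
      have := congrArg (Units.val) hzkk
      push_cast at this
      exact this
    have hcomm : ((z : K) ^ q) ^ p ^ kk = ((z : K) ^ p ^ kk) ^ q := by
      rw [← pow_mul, ← pow_mul, mul_comm]
    have hsub : ((z : K) - (z : K) ^ q) ^ p ^ kk = (z : K) ^ p ^ kk - ((z : K) ^ q) ^ p ^ kk :=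
      sub_pow_expChar_pow _ _ _
    rw [hsub, hzc, hcomm, hzc]
  · have hzq2 : (z : K) ^ (q ^ 2) = z := by
      rw [← hcard]; exact FiniteField.pow_card _
    have hsub : ((z : K) - (z : K) ^ q) ^ q = (z : K) ^ q - ((z : K) ^ q) ^ q := by
      rw [hq]
      exact sub_pow_expChar_pow _ _ _
    rw [hsub, ← pow_mul, ← pow_two, hzq2]
    ring


set_option maxHeartbeats 1000000 in
/-- Theorem 3.13.  Let `q = pⁿ` be odd, `f(x) = x²` or
`f(x) = x^{p^k+1}` with `1 ≤ k ≤ n` and `2n/gcd(2n,k)` odd, and `θ ≠ 0` with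
`θ^{q+1}` a nonsquare in the subfield `F` of order `q`.  Then the unital `U_θ`
in `Π(f)` contains an O'Nan configuration: four distinct blocks, any two of
which meet, such that no three of them pass through a common point (so the six
pairwise intersection points are pairwise distinct). -/
theorem stmt16 (p n q : ℕ) (hp : Nat.Prime p) (hpodd : Odd p) (hn : 0 < n) (hq : q = p ^ n)
    (K : Type) [Field K] [Fintype K] (hcard : Fintype.card K = q ^ 2)
    (f : K → K)
    (hf : (f = fun x : K => x ^ 2) ∨
      ∃ k : ℕ, 1 ≤ k ∧ k ≤ n ∧ Odd (2 * n / Nat.gcd (2 * n) k) ∧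
        f = fun x : K => x ^ (p ^ k + 1))
    (θ : K) (hθ : θ ≠ 0)
    (hns : ¬ ∃ s : K, s ^ q = s ∧ s ^ 2 = θ ^ (q + 1)) :
    ∃ B1 B2 B3 B4 : Set ((K × K) ⊕ Unit),
      B1 ∈ allBlocks K q θ f ∧ B2 ∈ allBlocks K q θ f ∧
      B3 ∈ allBlocks K q θ f ∧ B4 ∈ allBlocks K q θ f ∧
      B1 ≠ B2 ∧ B1 ≠ B3 ∧ B1 ≠ B4 ∧ B2 ≠ B3 ∧ B2 ≠ B4 ∧ B3 ≠ B4 ∧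
      (B1 ∩ B2).Nonempty ∧ (B1 ∩ B3).Nonempty ∧ (B1 ∩ B4).Nonempty ∧
      (B2 ∩ B3).Nonempty ∧ (B2 ∩ B4).Nonempty ∧ (B3 ∩ B4).Nonempty ∧
      B1 ∩ B2 ∩ B3 = ∅ ∧ B1 ∩ B2 ∩ B4 = ∅ ∧ B1 ∩ B3 ∩ B4 = ∅ ∧ B2 ∩ B3 ∩ B4 = ∅ := by
  classical
  -- ### unify the two branches for f
  obtain ⟨kk, m, hfQ, hm, hg0m, hid⟩ :
      ∃ (kk m : ℕ), f = (fun x : K => x ^ (p ^ kk + 1)) ∧ Odd m ∧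
        Nat.gcd kk (2 * n) * m = 2 * n ∧ ∀ x : K, x ^ (p ^ kk) ^ m = x := by
    have hpowcard : ∀ (t : ℕ) (x : K), x ^ (p ^ (2 * n)) ^ t = x := by
      intro t
      induction t with
      | zero => intro x; simp
      | succ t ih =>
        intro x
        rw [pow_succ, pow_mul, ih]
        have hc2 : p ^ (2 * n) = Fintype.card K := by
          rw [hcard, hq, ← pow_mul]; congr 1; omega
        rw [hc2]
        exact FiniteField.pow_card x
    rcases hf with h1 | ⟨k, hk1, hkn, hodd, h2⟩
    · refine ⟨0, 1, ?_, odd_one, by simp, ?_⟩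
      · rw [h1]; funext x; norm_num
      · intro x; simp
    · refine ⟨k, 2 * n / Nat.gcd (2 * n) k, h2, hodd, ?_, ?_⟩
      · rw [Nat.gcd_comm]; exact Nat.mul_div_cancel' (Nat.gcd_dvd_left _ _)
      · intro x
        obtain ⟨u, hu⟩ : Nat.gcd (2 * n) k ∣ k := Nat.gcd_dvd_right _ _
        have hgdvd : Nat.gcd (2 * n) k ∣ 2 * n := Nat.gcd_dvd_left _ _
        have hkm : k * (2 * n / Nat.gcd (2 * n) k) = 2 * n * u := by
          calc k * (2 * n / Nat.gcd (2 * n) k)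
              = Nat.gcd (2 * n) k * u * (2 * n / Nat.gcd (2 * n) k) := by rw [← hu]
            _ = Nat.gcd (2 * n) k * (2 * n / Nat.gcd (2 * n) k) * u := by ring
            _ = 2 * n * u := by rw [Nat.mul_div_cancel' hgdvd]
        have hexp : (p ^ k) ^ (2 * n / Nat.gcd (2 * n) k) = (p ^ (2 * n)) ^ u := by
          rw [← pow_mul, hkm, pow_mul]
        rw [hexp]
        exact hpowcard u x
  haveI hpF : Fact p.Prime := ⟨hp⟩
  haveI hKp : CharP K p := by
    haveI : CharP K (ringChar K) := ringChar.charP K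
    have hrprime : (ringChar K).Prime := CharP.char_is_prime K (ringChar K)
    obtain ⟨d, _, hcd⟩ := FiniteField.card K (ringChar K)
    have h1 : ringChar K ∣ Fintype.card K := by
      rw [hcd]; exact dvd_pow_self _ (by positivity)
    rw [hcard, hq, ← pow_mul] at h1
    have hrp : ringChar K = p :=
      (Nat.prime_dvd_prime_iff_eq hrprime hp).mp (hrprime.dvd_of_dvd_pow h1)
    exact hrp ▸ ringChar.charP K
  -- basic facts
  have hp2 : 2 ≤ p := hp.two_le
  have hpne2 : p ≠ 2 := by rintro rfl; exact (by norm_num : ¬ Odd 2) hpodd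
  have h2K : (2 : K) ≠ 0 := by
    have h22 : ((2 : ℕ) : K) ≠ 0 := by
      rw [Ne, CharP.cast_eq_zero_iff K p]
      intro hdvd
      have := (Nat.prime_dvd_prime_iff_eq hp Nat.prime_two).mp hdvd
      exact hpne2 this
    simpa using h22
  have hq0 : q ≠ 0 := by rw [hq]; positivity
  have hqodd : Odd q := by rw [hq]; exact hpodd.pow
  have hqhom : ∀ x y : K, (x + y) ^ q = x ^ q + y ^ q := by
    intro x y; rw [hq]; exact add_pow_char_pow ..
  have h2q : (2 : K) ^ q = 2 := by
    have h := hqhom 1 1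
    norm_num at h
    exact h
  have h2invq : ((2 : K)⁻¹) ^ q = 2⁻¹ := by rw [inv_pow, h2q]
  have hθq : θ ^ q ≠ θ := by
    intro h
    exact hns ⟨θ, h, by rw [pow_succ θ q, h, sq]⟩
  -- the frobenius power ring hom
  set σ : K →+* K := iterateFrobenius K p kk with hσdef
  have hσd : ∀ x : K, σ x = x ^ p ^ kk := fun x => iterateFrobenius_def ..
  have hσ2 : σ 2 = 2 := by rw [map_ofNat]
  -- j
  obtain ⟨j, hj0, hjQ, hjq⟩ := onan_j (K := K) hp hn hq hcard hm hg0m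
  have hQodd : Odd (p ^ kk) := hpodd.pow
  subst hfQ
  generalize hQg : p ^ kk = Q at hid hjQ hσd hQodd ⊢
  -- derived facts about Q
  have hQ1even : Even (Q + 1) := by simpa using hQodd.add_one
  -- key square/nonsquare lemma
  have hE : ∀ z t : K, t ^ q = t → z ^ (Q + 1) = t * θ → z = 0 := by
    intro z t ht hzt
    by_contra hz
    have ht0 : t ≠ 0 := by
      rintro rfl
      rw [zero_mul] at hzt
      exact hz (pow_eq_zero_iff (by omega) |>.mp hzt)
    have h2dvd : 2 ∣ Q + 1 := hQ1even.two_dvd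
    have hs2 : (z ^ ((Q + 1) / 2)) ^ 2 = t * θ := by
      rw [← pow_mul, Nat.div_mul_cancel h2dvd]; exact hzt
    set s : K := z ^ ((Q + 1) / 2) with hs
    have hsq2 : s ^ (q ^ 2) = s := by rw [← hcard]; exact FiniteField.pow_card s
    refine hns ⟨s ^ (q + 1) / t, ?_, ?_⟩
    · rw [div_pow, ht, ← pow_mul]
      congr 1
      calc s ^ ((q + 1) * q) = s ^ (q ^ 2) * s ^ q := by rw [← pow_add]; congr 1; ring
        _ = s ^ (q + 1) := by rw [hsq2, pow_succ, mul_comm]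
    · rw [div_pow, ← pow_mul, mul_comm (q + 1) 2, pow_mul, hs2]
      have htq1 : t ^ (q + 1) = t ^ 2 := by rw [pow_succ, ht, sq]
      rw [mul_pow, htq1]
      field_simp
  -- planarity
  have hPl : ∀ x D : K, D ≠ 0 → x * D ^ Q + x ^ Q * D = 0 → x = 0 :=
    onan_planar hQodd hm hid h2K
  -- the element w
  set y : K := θ / j with hy
  set A : K := ∑ i ∈ Finset.range m, (-1 : K) ^ i * y ^ Q ^ i with hA
  set w : K := 2⁻¹ * A with hw
  have htele : A + σ A = 2 * y := onan_tele σ hQodd hσd hm hid y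
  have hwQ : w ^ Q = 2⁻¹ * σ A := by
    rw [hw, mul_pow, ← hσd A, inv_pow]
    congr 2
    rw [← hσd 2, hσ2]
  have htele' : j * (A + σ A) = 2 * θ := by
    rw [htele, hy]
    field_simp
  have hT : j * (w + w ^ Q) = θ := by
    rw [hwQ, hw]
    have h2i : (2 : K)⁻¹ * 2 = 1 := inv_mul_cancel₀ h2K
    linear_combination 2⁻¹ * htele' + θ * h2i
  -- the configuration elements
  set c : K := (j - w) / 2 with hc
  set c' : K := -((j + w) / 2) with hc'
  set b : K := c ^ (Q + 1) with hb
  set b' : K := c' ^ (Q + 1) - θ with hb'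
  clear_value σ y A w c c' b b'
  have h2i : (2 : K)⁻¹ * 2 = 1 := inv_mul_cancel₀ h2K
  -- nondegeneracy
  have hw0 : w ≠ 0 := by
    intro h
    rw [h] at hT
    rw [zero_pow (by rintro rfl; simp at hQodd)] at hT
    simp at hT
    exact hθ (by linear_combination -hT)
  have hwj : w ≠ j := by
    intro h
    apply hθq
    have hθv : θ = 2 * j ^ 2 := by rw [← hT, h, hjQ]; ring
    rw [hθv, mul_pow, h2q, ← pow_mul, mul_comm 2 q, pow_mul, hjq]
    ring
  have hwnj : w ≠ -j := by
    intro h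
    apply hθq
    have hnjQ : (-j) ^ Q = -j := by rw [hQodd.neg_pow, hjQ]
    have hθv : θ = -(2 * j ^ 2) := by rw [← hT, h, hnjQ]; ring
    rw [hθv, neg_pow, hqodd.neg_one_pow, mul_pow, h2q, ← pow_mul, mul_comm 2 q, pow_mul, hjq]
    ring
  have hc0 : c ≠ 0 := by
    rw [hc, div_ne_zero_iff, sub_ne_zero]
    exact ⟨fun h => hwj h.symm, h2K⟩
  have hc'0 : c' ≠ 0 := by
    rw [hc', neg_ne_zero, div_ne_zero_iff]
    refine ⟨?_, h2K⟩
    intro h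
    exact hwnj (by linear_combination h)
  -- sigma values
  have hcQ : c ^ Q = (j - w ^ Q) / 2 := by
    rw [hc, ← hσd, map_div₀, map_sub, hσd j, hjQ, hσd w, hσ2]
  have hc'Q : c' ^ Q = -((j + w ^ Q) / 2) := by
    rw [hc', ← hσd, map_neg, map_div₀, map_add, hσd j, hjQ, hσd w, hσ2]
  -- the power-splitting helper
  have hpow : ∀ u v : K, (u + v) ^ (Q + 1) = (u ^ Q + v ^ Q) * (u + v) := by
    intro u v
    rw [pow_succ]
    congr 1
    rw [← hσd, map_add, hσd, hσd]
  -- core identities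
  have hID1 : (w + c) ^ (Q + 1) - b = 2⁻¹ * θ := by
    rw [hpow, hb, pow_succ, hcQ, hc]
    field_simp [h2K]
    linear_combination 2 * hT
  have hID1' : (w + c') ^ (Q + 1) - b' = 2⁻¹ * θ := by
    rw [hpow, hb', pow_succ, hc'Q, hc']
    field_simp [h2K]
    linear_combination -2 * hT
  have hID3 : c' ^ (Q + 1) - c ^ (Q + 1) = 2⁻¹ * θ := by
    rw [pow_succ, pow_succ, hcQ, hc'Q, hc, hc']
    field_simp [h2K]
    linear_combination 2 * hT
  -- identities at the symmetric points
  have hjc : -j + c = c' := by rw [hc, hc']; field_simp; ring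
  have hjc' : -j + -c' = -c := by rw [hc, hc']; field_simp; ring
  have hjc2 : j + -c = -c' := by rw [hc, hc']; field_simp; ring
  have hjc2' : j + c' = c := by rw [hc, hc']; field_simp; ring
  have hnegpow : ∀ u : K, (-u) ^ (Q + 1) = u ^ (Q + 1) := fun u => hQ1even.neg_pow u
  -- all eight membership equations
  have hM13a : (w + c) ^ (Q + 1) - b = 2⁻¹ * θ := hID1
  have hM13b : (w + c') ^ (Q + 1) - b' = 2⁻¹ * θ := hID1'
  have hM24a : (-w + -c) ^ (Q + 1) - b = 2⁻¹ * θ := by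
    have : -w + -c = -(w + c) := by ring
    rw [this, hnegpow]; exact hID1
  have hM24b : (-w + -c') ^ (Q + 1) - b' = 2⁻¹ * θ := by
    have : -w + -c' = -(w + c') := by ring
    rw [this, hnegpow]; exact hID1'
  have hM14a : (-j + c) ^ (Q + 1) - b = 2⁻¹ * θ := by
    rw [hjc, hb]; exact hID3
  have hM14b : (-j + -c') ^ (Q + 1) - b' = 2⁻¹ * θ := by
    rw [hjc', hnegpow, hb']
    linear_combination -hID3 - θ * h2i
  have hM23a : (j + -c) ^ (Q + 1) - b = 2⁻¹ * θ := by
    rw [hjc2, hnegpow, hb]; exact hID3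
  have hM23b : (j + c') ^ (Q + 1) - b' = 2⁻¹ * θ := by
    rw [hjc2', hb']
    linear_combination -hID3 - θ * h2i
  -- t-values
  have ht0 : (0 : K) ^ q = 0 := zero_pow hq0
  have ht1 : (1 : K) ^ q = 1 := one_pow q
  have hbF : b ∉ scalarSet K q θ := by
    rintro ⟨t, ht, hbt⟩
    exact hc0 (hE c t ht (by rw [← hbt, hb]))
  have hb'F : b' ∉ scalarSet K q θ := by
    rintro ⟨t, ht, hbt⟩
    refine hc'0 (hE c' (t + 1) ?_ ?_)
    · rw [hqhom, ht, one_pow]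
    · rw [add_mul, one_mul, ← hbt, hb']; ring
  have hpl2 : ∀ x cc : K, cc ≠ 0 → (x + cc) ^ (Q + 1) = (x + -cc) ^ (Q + 1) → x = 0 := by
    intro x cc hcc hxe
    refine hPl x cc hcc ?_
    have he1 : (x + cc) ^ (Q + 1) = (x ^ Q + cc ^ Q) * (x + cc) := hpow x cc
    have he2 : (x + -cc) ^ (Q + 1) = (x ^ Q + (-cc) ^ Q) * (x + -cc) := hpow x (-cc)
    have hneg : (-cc) ^ Q = -(cc ^ Q) := hQodd.neg_pow cc
    rw [hneg] at he2
    have h20 : (2 : K) * (x * cc ^ Q + x ^ Q * cc) = 0 := by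
      linear_combination hxe - he1 + he2
    rcases mul_eq_zero.mp h20 with h | h
    · exact absurd h h2K
    · exact h
  have hpair12 : ∀ P, P ∈ blockAff K q θ (fun x : K => x ^ (Q + 1)) c b →
      P ∈ blockAff K q θ (fun x : K => x ^ (Q + 1)) (-c) b → P = Sum.inl ((0 : K), (0 : K)) := by
    rintro P ⟨x, t, ht, heq, rfl⟩ ⟨x', t', ht', heq', hPeq⟩
    rw [Sum.inl.injEq, Prod.mk.injEq] at hPeq
    obtain ⟨hx, hy⟩ := hPeq
    beta_reduce at heq heq'
    rw [← hx, ← hy] at heq'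
    have hxx : x = 0 := hpl2 x c hc0 (by linear_combination heq - heq')
    subst hxx
    have hty : t * θ = 0 := by rw [← heq, zero_add, hb]; ring
    rw [hty]
  have hpair34 : ∀ P, P ∈ blockAff K q θ (fun x : K => x ^ (Q + 1)) c' b' →
      P ∈ blockAff K q θ (fun x : K => x ^ (Q + 1)) (-c') b' → P = Sum.inl ((0 : K), θ) := by
    rintro P ⟨x, t, ht, heq, rfl⟩ ⟨x', t', ht', heq', hPeq⟩
    rw [Sum.inl.injEq, Prod.mk.injEq] at hPeq
    obtain ⟨hx, hy⟩ := hPeq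
    beta_reduce at heq heq'
    rw [← hx, ← hy] at heq'
    have hxx : x = 0 := hpl2 x c' hc'0 (by linear_combination heq - heq')
    subst hxx
    have hty : t * θ = θ := by rw [← heq, zero_add, hb']; ring
    rw [hty]
  -- blocks
  refine ⟨blockAff K q θ (fun x : K => x ^ (Q + 1)) c b,
         blockAff K q θ (fun x : K => x ^ (Q + 1)) (-c) b,
         blockAff K q θ (fun x : K => x ^ (Q + 1)) c' b',
         blockAff K q θ (fun x : K => x ^ (Q + 1)) (-c') b',
         ?_, ?_, ?_, ?_, ?_, ?_, ?_, ?_, ?_, ?_, ?_, ?_, ?_, ?_, ?_, ?_, ?_, ?_, ?_, ?_⟩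
  -- memberships
  case _ => exact Or.inr ⟨c, b, hbF, rfl⟩
  case _ => exact Or.inr ⟨-c, b, hbF, rfl⟩
  case _ => exact Or.inr ⟨c', b', hb'F, rfl⟩
  case _ => exact Or.inr ⟨-c', b', hb'F, rfl⟩
  -- B1 ≠ B2
  case _ =>
    intro h12
    have hP : Sum.inl (w, 2⁻¹ * θ) ∈ blockAff K q θ (fun x : K => x ^ (Q + 1)) c b :=
      ⟨w, 2⁻¹, h2invq, hM13a, rfl⟩
    rw [h12] at hP
    obtain ⟨x, t, ht, heq, hPeq⟩ := hP
    rw [Sum.inl.injEq, Prod.mk.injEq] at hPeq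
    obtain ⟨hx, hy⟩ := hPeq
    beta_reduce at heq
    rw [← hx, ← hy] at heq
    exact hw0 (hpl2 w c hc0 (by linear_combination hM13a - heq))
  -- B1 ≠ B3
  case _ =>
    intro h13
    have hP : Sum.inl ((0 : K), (0 : K) * θ) ∈ blockAff K q θ (fun x : K => x ^ (Q + 1)) c b :=
      ⟨0, 0, ht0, by beta_reduce; rw [zero_add, hb, sub_self, zero_mul], rfl⟩
    rw [h13] at hP
    obtain ⟨x, t, ht, heq, hPeq⟩ := hP
    rw [Sum.inl.injEq, Prod.mk.injEq] at hPeq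
    obtain ⟨hx, hy⟩ := hPeq
    beta_reduce at heq
    rw [← hx, ← hy, zero_add, hb'] at heq
    exact hθ (by linear_combination heq)
  -- B1 ≠ B4
  case _ =>
    intro h14
    have hP : Sum.inl ((0 : K), (0 : K) * θ) ∈ blockAff K q θ (fun x : K => x ^ (Q + 1)) c b :=
      ⟨0, 0, ht0, by beta_reduce; rw [zero_add, hb, sub_self, zero_mul], rfl⟩
    rw [h14] at hP
    obtain ⟨x, t, ht, heq, hPeq⟩ := hP
    rw [Sum.inl.injEq, Prod.mk.injEq] at hPeq
    obtain ⟨hx, hy⟩ := hPeq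
    beta_reduce at heq
    rw [← hx, ← hy, zero_add, hnegpow, hb'] at heq
    exact hθ (by linear_combination heq)
  -- B2 ≠ B3
  case _ =>
    intro h23
    have hP : Sum.inl ((0 : K), (0 : K) * θ) ∈ blockAff K q θ (fun x : K => x ^ (Q + 1)) (-c) b :=
      ⟨0, 0, ht0, by beta_reduce; rw [zero_add, hnegpow, hb, sub_self, zero_mul], rfl⟩
    rw [h23] at hP
    obtain ⟨x, t, ht, heq, hPeq⟩ := hP
    rw [Sum.inl.injEq, Prod.mk.injEq] at hPeq
    obtain ⟨hx, hy⟩ := hPeq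
    beta_reduce at heq
    rw [← hx, ← hy, zero_add, hb'] at heq
    exact hθ (by linear_combination heq)
  -- B2 ≠ B4
  case _ =>
    intro h24
    have hP : Sum.inl ((0 : K), (0 : K) * θ) ∈ blockAff K q θ (fun x : K => x ^ (Q + 1)) (-c) b :=
      ⟨0, 0, ht0, by beta_reduce; rw [zero_add, hnegpow, hb, sub_self, zero_mul], rfl⟩
    rw [h24] at hP
    obtain ⟨x, t, ht, heq, hPeq⟩ := hP
    rw [Sum.inl.injEq, Prod.mk.injEq] at hPeq
    obtain ⟨hx, hy⟩ := hPeq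
    beta_reduce at heq
    rw [← hx, ← hy, zero_add, hnegpow, hb'] at heq
    exact hθ (by linear_combination heq)
  -- B3 ≠ B4
  case _ =>
    intro h34
    have hP : Sum.inl (w, 2⁻¹ * θ) ∈ blockAff K q θ (fun x : K => x ^ (Q + 1)) c' b' :=
      ⟨w, 2⁻¹, h2invq, hM13b, rfl⟩
    rw [h34] at hP
    obtain ⟨x, t, ht, heq, hPeq⟩ := hP
    rw [Sum.inl.injEq, Prod.mk.injEq] at hPeq
    obtain ⟨hx, hy⟩ := hPeq
    beta_reduce at heq
    rw [← hx, ← hy] at heq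
    exact hw0 (hpl2 w c' hc'0 (by linear_combination hM13b - heq))
  -- nonempty B1 ∩ B2
  case _ =>
    exact ⟨Sum.inl ((0 : K), (0 : K) * θ),
      ⟨0, 0, ht0, by beta_reduce; rw [zero_add, hb, sub_self, zero_mul], rfl⟩,
      ⟨0, 0, ht0, by beta_reduce; rw [zero_add, hnegpow, hb, sub_self, zero_mul], rfl⟩⟩
  -- nonempty B1 ∩ B3
  case _ =>
    exact ⟨Sum.inl (w, 2⁻¹ * θ),
      ⟨w, 2⁻¹, h2invq, hM13a, rfl⟩, ⟨w, 2⁻¹, h2invq, hM13b, rfl⟩⟩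
  -- nonempty B1 ∩ B4
  case _ =>
    exact ⟨Sum.inl (-j, 2⁻¹ * θ),
      ⟨-j, 2⁻¹, h2invq, hM14a, rfl⟩, ⟨-j, 2⁻¹, h2invq, hM14b, rfl⟩⟩
  -- nonempty B2 ∩ B3
  case _ =>
    exact ⟨Sum.inl (j, 2⁻¹ * θ),
      ⟨j, 2⁻¹, h2invq, hM23a, rfl⟩, ⟨j, 2⁻¹, h2invq, hM23b, rfl⟩⟩
  -- nonempty B2 ∩ B4
  case _ =>
    exact ⟨Sum.inl (-w, 2⁻¹ * θ),
      ⟨-w, 2⁻¹, h2invq, hM24a, rfl⟩, ⟨-w, 2⁻¹, h2invq, hM24b, rfl⟩⟩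
  -- nonempty B3 ∩ B4
  case _ =>
    exact ⟨Sum.inl ((0 : K), (1 : K) * θ),
      ⟨0, 1, ht1, by beta_reduce; rw [zero_add, hb']; ring, rfl⟩,
      ⟨0, 1, ht1, by beta_reduce; rw [zero_add, hnegpow, hb']; ring, rfl⟩⟩
  -- empty B1 ∩ B2 ∩ B3
  case _ =>
    apply Set.eq_empty_iff_forall_notMem.mpr
    rintro P ⟨⟨hP1, hP2⟩, hP3⟩
    obtain ⟨x, t, ht, heq, hPeq⟩ := hP3
    rw [hpair12 P hP1 hP2, Sum.inl.injEq, Prod.mk.injEq] at hPeq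
    obtain ⟨hx, hy⟩ := hPeq
    beta_reduce at heq
    rw [← hx, ← hy, zero_add, hb'] at heq
    exact hθ (by linear_combination heq)
  -- empty B1 ∩ B2 ∩ B4
  case _ =>
    apply Set.eq_empty_iff_forall_notMem.mpr
    rintro P ⟨⟨hP1, hP2⟩, hP3⟩
    obtain ⟨x, t, ht, heq, hPeq⟩ := hP3
    rw [hpair12 P hP1 hP2, Sum.inl.injEq, Prod.mk.injEq] at hPeq
    obtain ⟨hx, hy⟩ := hPeq
    beta_reduce at heq
    rw [← hx, ← hy, zero_add, hnegpow, hb'] at heq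
    exact hθ (by linear_combination heq)
  -- empty B1 ∩ B3 ∩ B4
  case _ =>
    apply Set.eq_empty_iff_forall_notMem.mpr
    rintro P ⟨⟨hP1, hP3⟩, hP4⟩
    obtain ⟨x, t, ht, heq, hPeq⟩ := hP1
    rw [hpair34 P hP3 hP4, Sum.inl.injEq, Prod.mk.injEq] at hPeq
    obtain ⟨hx, hy⟩ := hPeq
    beta_reduce at heq
    rw [← hx, ← hy, zero_add, hb] at heq
    exact hθ (by linear_combination -heq)
  -- empty B2 ∩ B3 ∩ B4
  case _ =>
    apply Set.eq_empty_iff_forall_notMem.mpr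
    rintro P ⟨⟨hP2, hP3⟩, hP4⟩
    obtain ⟨x, t, ht, heq, hPeq⟩ := hP2
    rw [hpair34 P hP3 hP4, Sum.inl.injEq, Prod.mk.injEq] at hPeq
    obtain ⟨hx, hy⟩ := hPeq
    beta_reduce at heq
    rw [← hx, ← hy, zero_add, hnegpow, hb] at heq
    exact hθ (by linear_combination -heq)
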